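/- Let G be a simple undirected graph on vertices {1,…,n}. Every codeword of the graph code 𝒞(G) has even Hamming weight (i.e., 𝒞(G) is of Type II) if and only if every vertex of G has odd degree (i.e., G is anti-Eulerian). -/

import Mathlib

open Finset
open scoped Classical

noncomputable section

/-- The Hamming weight of a vector in `GF(4)^n`. -/
def wt {n : ℕ} (u : Fin n → GaloisField 2 2) : ℕ :=
  (Finset.univ.filter fun i => u i ≠ 0).card

/-- Row `i` of the matrix `Γ + ωI` associated to a graph `G`. -/
def graphRow {n : ℕ} (ω : GaloisField 2 2) (G : SimpleGraph (Fin n)) (i : Fin n) :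
    Fin n → GaloisField 2 2 :=
  fun j => if i = j then ω else if G.Adj i j then 1 else 0

/-- The graph code of `G`: the `GF(2)`-linear span of the rows of `Γ + ωI`. -/
def graphCode {n : ℕ} (ω : GaloisField 2 2) (G : SimpleGraph (Fin n)) :
    Submodule (ZMod 2) (Fin n → GaloisField 2 2) :=
  Submodule.span (ZMod 2) (Set.range (graphRow ω G))

private lemma zmod2_cases : ∀ x : ZMod 2, x = 0 ∨ x = 1 := by decide

private lemma zmod2_ne_zero : ∀ x : ZMod 2, x ≠ 0 ↔ x = 1 := by decide

private lemma zmod2_ind : ∀ x y : ZMod 2,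
    (if x = 1 ∨ y = 1 then (1 : ZMod 2) else 0) = x + y + x * y := by decide

private lemma zmod2_one_add : ∀ x : ZMod 2, 1 + x = 0 → x = 1 := by decide

theorem stmt10 (n : ℕ) (ω : GaloisField 2 2) (hω : ω ^ 2 = ω + 1)
    (G : SimpleGraph (Fin n)) [DecidableRel G.Adj] :
    (∀ u ∈ graphCode ω G, Even (wt u)) ↔ ∀ v : Fin n, Odd (G.degree v) := by
  classical
  haveI : CharP (GaloisField 2 2) 2 :=
    charP_of_injective_algebraMap (algebraMap (ZMod 2) (GaloisField 2 2)).injective 2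
  set φ : ZMod 2 →+* GaloisField 2 2 := algebraMap (ZMod 2) (GaloisField 2 2) with hφ
  have hω0 : ω ≠ 0 := by
    intro h
    rw [h] at hω
    simp only [ne_eq, zero_pow, zero_add, OfNat.ofNat_ne_zero, not_false_iff] at hω
    exact one_ne_zero hω.symm
  have hω1 : ω + 1 ≠ 0 := by
    intro h
    have hneg := CharTwo.neg_eq (R := GaloisField 2 2) 1
    have h1 : ω = 1 := (eq_neg_of_add_eq_zero_left h).trans hneg
    rw [h1, one_pow] at hω
    have h2 := CharTwo.add_self_eq_zero (R := GaloisField 2 2) 1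
    exact one_ne_zero (hω.trans h2)
  have key0 : ∀ x y : ZMod 2, (φ x * ω + φ y = 0 ↔ x = 0 ∧ y = 0) := by
    intro x y
    rcases zmod2_cases x with hx | hx <;> rcases zmod2_cases y with hy | hy <;>
      subst hx <;> subst hy <;>
      simp_all [map_zero, map_one, hω0, hω1]
  set a : Fin n → Fin n → ZMod 2 := fun i j => if G.Adj i j then 1 else 0 with ha
  set d : Fin n → ZMod 2 := fun i => (G.degree i : ZMod 2) with hd
  have hdeg : ∀ i, ∑ j, a i j = d i := by
    intro i
    simp only [ha, Finset.sum_boole, hd]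
    congr 1
    rw [← SimpleGraph.neighborFinset_eq_filter]
    rfl
  have hasymm : ∀ i j, a i j = a j i := by
    intro i j; simp only [ha, SimpleGraph.adj_comm]
  have hairr : ∀ i, a i i = 0 := by
    intro i; simp [ha]
  -- the key weight parity formula
  have hwt : ∀ c : Fin n → ZMod 2,
      ((wt (∑ i, c i • graphRow ω G i) : ZMod 2)) = ∑ i, c i * (1 + d i) := by
    intro c
    set b : Fin n → ZMod 2 := fun j => ∑ i, c i * a i j with hb
    have hrow : ∀ j, (∑ i, c i • graphRow ω G i) j = φ (c j) * ω + φ (b j) := by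
      intro j
      rw [Finset.sum_apply]
      simp only [Pi.smul_apply]
      have hterm : ∀ i, c i • graphRow ω G i j
          = (if i = j then φ (c i) * ω else 0) + φ (c i * a i j) := by
        intro i
        by_cases hij : i = j
        · subst hij
          simp [graphRow, ha, Algebra.smul_def, G.irrefl, hφ]
        · by_cases hadj : G.Adj i j <;>
            simp [graphRow, ha, hij, hadj, Algebra.smul_def, hφ]
      rw [Finset.sum_congr rfl fun i _ => hterm i, Finset.sum_add_distrib,
        Finset.sum_ite_eq' Finset.univ j (fun i => φ (c i) * ω)]
      simp [hb, map_sum]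
    have hne : ∀ j, (∑ i, c i • graphRow ω G i) j ≠ 0 ↔ (c j = 1 ∨ b j = 1) := by
      intro j
      rw [hrow j, ne_eq, key0, ← zmod2_ne_zero, ← zmod2_ne_zero]
      tauto
    have hcast : ((wt (∑ i, c i • graphRow ω G i) : ZMod 2))
        = ∑ j, (if c j = 1 ∨ b j = 1 then (1 : ZMod 2) else 0) := by
      rw [wt, Finset.card_filter, Nat.cast_sum]
      refine Finset.sum_congr rfl fun j _ => ?_
      rw [apply_ite (Nat.cast : ℕ → ZMod 2), Nat.cast_one, Nat.cast_zero]
      exact if_congr (hne j) rfl rfl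
    rw [hcast,
      Finset.sum_congr rfl fun j _ => zmod2_ind (c j) (b j),
      Finset.sum_add_distrib, Finset.sum_add_distrib]
    have hsb : ∑ j, b j = ∑ i, c i * d i := by
      simp only [hb]
      rw [Finset.sum_comm]
      exact Finset.sum_congr rfl fun i _ => by rw [← Finset.mul_sum, hdeg i]
    have hcb : ∑ j, c j * b j = 0 := by
      simp only [hb, Finset.mul_sum]
      rw [← Finset.sum_product']
      apply Finset.sum_ninvolution (fun p => (p.2, p.1))
      · intro p
        have : c p.2 * (c p.1 * a p.1 p.2) = c p.1 * (c p.2 * a p.2 p.1) := by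
          rw [hasymm p.1 p.2]; ring
        rw [← this, CharTwo.add_self_eq_zero]
      · intro p hp hfix
        apply hp
        have h12 : p.2 = p.1 := congrArg Prod.fst hfix
        rw [h12, hairr, mul_zero, mul_zero]
      · intro p; exact Finset.mem_univ _
      · intro p; rfl
    rw [hsb, hcb, add_zero, ← Finset.sum_add_distrib]
    exact Finset.sum_congr rfl fun i _ => by ring
  constructor
  · intro h v
    set c : Fin n → ZMod 2 := fun i => if i = v then 1 else 0 with hc
    have hmem : (∑ i, c i • graphRow ω G i) ∈ graphCode ω G :=
      Submodule.sum_mem _ fun i _ =>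
        Submodule.smul_mem _ _ (Submodule.subset_span ⟨i, rfl⟩)
    have heven := h _ hmem
    rw [← ZMod.natCast_eq_zero_iff_even, hwt c] at heven
    have hsum : ∑ i, c i * (1 + d i) = 1 + d v := by
      have hstep : ∀ i ∈ Finset.univ, c i * (1 + d i)
          = (if i = v then 1 + d i else 0) := by
        intro i _
        by_cases hi : i = v <;> simp [hc, hi]
      rw [Finset.sum_congr rfl hstep,
        Finset.sum_ite_eq' Finset.univ v (fun i => 1 + d i),
        if_pos (Finset.mem_univ v)]
    rw [hsum] at heven
    have hdv : d v = 1 := zmod2_one_add _ heven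
    rw [hd] at hdv
    exact (ZMod.natCast_eq_one_iff_odd).mp hdv
  · intro h u hu
    rw [graphCode, Submodule.mem_span_range_iff_exists_fun] at hu
    obtain ⟨c, rfl⟩ := hu
    rw [← ZMod.natCast_eq_zero_iff_even, hwt c]
    apply Finset.sum_eq_zero
    intro i _
    have : d i = 1 := (ZMod.natCast_eq_one_iff_odd).mpr (h i)
    rw [this]
    have h11 : (1 : ZMod 2) + 1 = 0 := by decide
    rw [h11, mul_zero]
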